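/- (Characterization of the sail for parallel lines.) Let α, β be real affine forms on ℝ² whose linear parts are proportional and nonzero (parallel distinct lines H_α, H_β). Then x + iy ∈ S(α,β) (x,y ∈ ℝ²) if and only if α(x)β(x) < 0 and y is either zero or parallel to H_α (i.e., a·y = 0, where a is the common direction of the linear parts). -/

import Mathlib

open Complex

noncomputable def affC (a : ℝ × ℝ) (b : ℝ) (x y : ℝ × ℝ) : ℂ :=
  (a.1 : ℂ) * ((x.1 : ℂ) + (y.1 : ℂ) * I) +
  (a.2 : ℂ) * ((x.2 : ℂ) + (y.2 : ℂ) * I) + (b : ℂ)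

def sailMem (a : ℝ × ℝ) (b : ℝ) (c : ℝ × ℝ) (d : ℝ) (x y : ℝ × ℝ) : Prop :=
  affC a b x y * affC c d x y ≠ 0 ∧
  ∃ r : ℝ, r < 0 ∧ affC a b x y / affC c d x y = (r : ℂ)

lemma affC_re (a : ℝ × ℝ) (b : ℝ) (x y : ℝ × ℝ) :
    (affC a b x y).re = a.1 * x.1 + a.2 * x.2 + b := by simp [affC]

lemma affC_im (a : ℝ × ℝ) (b : ℝ) (x y : ℝ × ℝ) :
    (affC a b x y).im = a.1 * y.1 + a.2 * y.2 := by simp [affC]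

theorem sail_parallel_characterization (a : ℝ × ℝ) (b d lam : ℝ) (x y : ℝ × ℝ)
    (hlam : lam ≠ 0) (ha : a ≠ (0, 0)) (hdist : d ≠ lam * b) :
    sailMem a b (lam * a.1, lam * a.2) d x y ↔
      ((a.1 * x.1 + a.2 * x.2 + b) *
        (lam * a.1 * x.1 + lam * a.2 * x.2 + d) < 0 ∧
       (y = (0, 0) ∨ a.1 * y.1 + a.2 * y.2 = 0)) := by
  have hα : affC a b x y = affC a b x y := rfl
  set α := affC a b x y with hα
  set β := affC (lam * a.1, lam * a.2) d x y with hβ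
  have hαre : α.re = a.1 * x.1 + a.2 * x.2 + b := affC_re ..
  have hαim : α.im = a.1 * y.1 + a.2 * y.2 := affC_im ..
  have hβre : β.re = lam * a.1 * x.1 + lam * a.2 * x.2 + d := affC_re ..
  have hβim : β.im = lam * (a.1 * y.1 + a.2 * y.2) := by
    have h := affC_im (lam * a.1, lam * a.2) d x y
    rw [← hβ] at h; rw [h]; ring
  constructor
  · rintro ⟨hne, r, hr, hdiv⟩
    rw [← hα, ← hβ] at hne hdiv
    have hβ0 : β ≠ 0 := fun h => hne (by rw [h, mul_zero])
    have hαrβ : α = (r : ℂ) * β := by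
      field_simp at hdiv; rw [hdiv, mul_comm]
    have hre : α.re = r * β.re := by rw [hαrβ]; simp
    have him : α.im = r * β.im := by rw [hαrβ]; simp
    rw [hαre, hβre] at hre
    rw [hαim, hβim] at him
    have hv : a.1 * y.1 + a.2 * y.2 = 0 := by
      by_contra hv
      have h2 : (a.1 * y.1 + a.2 * y.2) * (r * lam - 1) = 0 := by
        linear_combination -him
      have hrl : r * lam = 1 := by
        rcases mul_eq_zero.mp h2 with h | h
        · exact absurd h hv
        · linarith
      apply hdist
      linear_combination (-lam) * hre - (lam * (a.1 * x.1 + a.2 * x.2) + d) * hrl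
    have hβim0 : β.im = 0 := by rw [hβim, hv, mul_zero]
    have hβre0 : β.re ≠ 0 := fun h => hβ0 (Complex.ext h hβim0)
    have hXne : (lam * a.1 * x.1 + lam * a.2 * x.2 + d) ≠ 0 := hβre ▸ hβre0
    have hX2 : 0 < (lam * a.1 * x.1 + lam * a.2 * x.2 + d) ^ 2 := by positivity
    refine ⟨?_, Or.inr hv⟩
    rw [hre]
    nlinarith [hX2]
  · rintro ⟨hprod, hy⟩
    have hv : a.1 * y.1 + a.2 * y.2 = 0 := by
      rcases hy with h | h
      · rw [h]; ring
      · exact h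
    have hαim0 : α.im = 0 := by rw [hαim, hv]
    have hβim0 : β.im = 0 := by rw [hβim, hv, mul_zero]
    have hαr : α = ((α.re : ℝ) : ℂ) := by
      rw [Complex.ext_iff]; constructor
      · simp
      · simp [hαim0]
    have hβr : β = ((β.re : ℝ) : ℂ) := by
      rw [Complex.ext_iff]; constructor
      · simp
      · simp [hβim0]
    have hαre0 : α.re ≠ 0 := by
      intro h; rw [hαre] at h; rw [h] at hprod; simp at hprod
    have hβre0 : β.re ≠ 0 := by
      intro h; rw [hβre] at h; rw [h] at hprod; simp at hprod
    have hα0 : α ≠ 0 := by rw [hαr]; exact_mod_cast hαre0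
    have hβ0 : β ≠ 0 := by rw [hβr]; exact_mod_cast hβre0
    refine ⟨?_, α.re / β.re, ?_, ?_⟩
    · rw [← hα, ← hβ]; exact mul_ne_zero hα0 hβ0
    · have h1 : α.re * β.re < 0 := by rw [hαre, hβre]; exact hprod
      rcases mul_neg_iff.mp h1 with ⟨h2, h3⟩ | ⟨h2, h3⟩
      · exact div_neg_of_pos_of_neg h2 h3
      · exact div_neg_of_neg_of_pos h2 h3
    · rw [← hα, ← hβ, Complex.ofReal_div, ← hαr, ← hβr]
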